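/- The space X_crs is not paracompact: the open covering by U_0 = X_crs \ ⋃_{n≥1} e_n^0 and U_n = C_n \ {x} (n ≥ 1) admits no locally finite open refinement. -/

import Mathlib

open Set Topology Filter

noncomputable section

/-- The closed unit disk. -/
def D : Type := {z : ℂ // ‖z‖ ≤ 1}

instance : TopologicalSpace D := instTopologicalSpaceSubtype

/-- The wedge point on each disk. -/
def basept : D := ⟨1, by norm_num⟩

/-- The outer point (outer 0-cell) on each disk. -/
def outerpt : D := ⟨-1, by norm_num⟩

/-- Wedge relation: glue all copies of the base point together. -/
def wsetoid : Setoid (ℕ × D) where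
  r p q := p = q ∨ (p.2 = basept ∧ q.2 = basept)
  iseqv := by
    constructor
    · intro p; exact Or.inl rfl
    · rintro p q (rfl | ⟨h1, h2⟩)
      · exact Or.inl rfl
      · exact Or.inr ⟨h2, h1⟩
    · rintro p q r (rfl | ⟨h1, h2⟩) (rfl | ⟨h3, h4⟩)
      · exact Or.inl rfl
      · exact Or.inr ⟨h3, h4⟩
      · exact Or.inr ⟨h1, h2⟩
      · exact Or.inr ⟨h1, h4⟩

/-- The wedge of countably many closed 2-disks, with the weak (CW) topology. -/
def X : Type := Quotient wsetoid

instance : TopologicalSpace X := instTopologicalSpaceQuotient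

/-- The point of the `n`-th disk with disk-coordinate `z`. -/
def pt (n : ℕ) (z : D) : X := Quotient.mk wsetoid (n, z)

/-- The origin (the wedge point `x`). -/
def origin : X := pt 0 basept

/-- The outer 0-cell `e_n^0` of the `n`-th disk. -/
def outer (n : ℕ) : X := pt n outerpt

/-- The `n`-th closed 2-cell `C_n`. -/
def cell (n : ℕ) : Set X := Set.range (pt n)

/-- The open sets of the coarser topology `τ`: CW-open sets which either do not
contain the origin, or contain all but finitely many punctured cells `C_n \ {e_n^0}`. -/
def crsOpen (U : Set X) : Prop :=
  IsOpen U ∧ (origin ∉ U ∨ {n : ℕ | ¬ (cell n \ {outer n} ⊆ U)}.Finite)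

/-- The coarser topology `τ` on the wedge of disks. -/
def crsTop : TopologicalSpace X where
  IsOpen := crsOpen
  isOpen_univ := ⟨isOpen_univ, Or.inr (Set.Finite.subset Set.finite_empty
    (fun _ hn => absurd (Set.subset_univ _) hn))⟩
  isOpen_inter := by
    rintro U V ⟨hU, hU2⟩ ⟨hV, hV2⟩
    refine ⟨hU.inter hV, ?_⟩
    by_cases hx : origin ∈ U ∩ V
    · have h1 := hU2.resolve_left (fun h => h hx.1)
      have h2 := hV2.resolve_left (fun h => h hx.2)
      refine Or.inr ((h1.union h2).subset ?_)
      intro n hn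
      by_contra hc
      simp only [Set.mem_union, Set.mem_setOf_eq, not_or, not_not] at hc
      exact hn (Set.subset_inter hc.1 hc.2)
    · exact Or.inl hx
  isOpen_sUnion := by
    intro S hS
    refine ⟨isOpen_sUnion fun U hU => (hS U hU).1, ?_⟩
    by_cases hx : origin ∈ ⋃₀ S
    · obtain ⟨U, hUS, hxU⟩ := hx
      have h1 := (hS U hUS).2.resolve_left (fun h => h hxU)
      refine Or.inr (h1.subset ?_)
      intro n hn hsub
      exact hn (hsub.trans (Set.subset_sUnion_of_mem hUS))
    · exact Or.inl hx

/-- The open set `U₀`: complement of all the outer 0-cells. -/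
def U0 : Set X := {y | ∀ n, y ≠ outer n}

/-- The set `A` of all outer 0-cells. -/
def A : Set X := Set.range outer

lemma basept_ne_outerpt : basept ≠ outerpt := by
  intro h
  have : (1 : ℂ) = -1 := congrArg Subtype.val h
  norm_num at this

lemma pt_eq_iff {n m : ℕ} {z w : D} :
    pt n z = pt m w ↔ (n = m ∧ z = w) ∨ (z = basept ∧ w = basept) := by
  constructor
  · intro h
    have := Quotient.exact h
    rcases this with h | h
    · exact Or.inl ⟨congrArg Prod.fst h, congrArg Prod.snd h⟩
    · exact Or.inr h
  · rintro (⟨rfl, rfl⟩ | ⟨h1, h2⟩)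
    · rfl
    · exact Quotient.sound (Or.inr ⟨h1, h2⟩)

lemma pt_eq_origin_iff {n : ℕ} {z : D} : pt n z = origin ↔ z = basept := by
  unfold origin
  rw [pt_eq_iff]
  constructor
  · rintro (⟨rfl, rfl⟩ | ⟨h, _⟩) <;> [rfl; exact h]
  · rintro rfl; exact Or.inr ⟨rfl, rfl⟩

lemma pt_eq_outer_iff {n m : ℕ} {z : D} : pt n z = outer m ↔ n = m ∧ z = outerpt := by
  unfold outer
  rw [pt_eq_iff]
  constructor
  · rintro (⟨rfl, rfl⟩ | ⟨_, h⟩)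
    · exact ⟨rfl, rfl⟩
    · exact absurd h.symm basept_ne_outerpt
  · rintro ⟨rfl, rfl⟩; exact Or.inl ⟨rfl, rfl⟩

lemma mem_cell_iff {n m : ℕ} {z : D} : pt n z ∈ cell m ↔ n = m ∨ z = basept := by
  constructor
  · rintro ⟨w, hw⟩
    rcases pt_eq_iff.1 hw with ⟨rfl, rfl⟩ | ⟨h1, h2⟩
    · exact Or.inl rfl
    · exact Or.inr h2
  · rintro (rfl | rfl)
    · exact ⟨z, rfl⟩
    · exact ⟨basept, (pt_eq_iff.2 (Or.inr ⟨rfl, rfl⟩))⟩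

lemma isOpen_X_iff {U : Set X} : IsOpen U ↔ ∀ n, IsOpen ((fun z => pt n z) ⁻¹' U) := by
  constructor
  · intro h n
    have : Continuous (fun z : D => pt n z) :=
      (continuous_quotient_mk').comp (Continuous.prodMk_right n)
    exact this.isOpen_preimage U h
  · intro h
    refine (isOpen_coinduced (f := Quotient.mk wsetoid)).2 ?_
    have : Quotient.mk wsetoid ⁻¹' U = ⋃ n, ({n} : Set ℕ) ×ˢ ((fun z => pt n z) ⁻¹' U) := by
      ext ⟨n, z⟩
      simp [pt]
      exact Iff.rfl
    rw [this]
    exact isOpen_iUnion fun n => (isOpen_discrete _).prod (h n)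

lemma exists_near_outerpt {S : Set D} (hS : IsOpen S) (h : outerpt ∈ S) :
    ∃ z ∈ S, z ≠ outerpt := by
  replace hS := (isOpen_induced_iff (t := (inferInstance : TopologicalSpace ℂ))
    (f := (@Subtype.val ℂ (fun z => ‖z‖ ≤ 1) : D → ℂ))).1 hS
  obtain ⟨O, hO, rfl⟩ := hS
  obtain ⟨ε, hε, hball⟩ := Metric.isOpen_iff.1 hO _ h
  set δ : ℝ := min ε 1 / 2 with hδdef
  have hδ0 : 0 < δ := by positivity
  have hδε : δ < ε := by
    have := min_le_left ε (1:ℝ); rw [hδdef]; linarith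
  have hδ1 : δ ≤ 1 := by
    have := min_le_right ε (1:ℝ); rw [hδdef]; linarith
  have hmem : ‖(-1 + (δ:ℂ))‖ ≤ 1 := by
    have h1 : (-1 + (δ:ℂ)) = ((δ - 1 : ℝ) : ℂ) := by push_cast; ring
    rw [h1, Complex.norm_real, Real.norm_eq_abs, abs_le]
    constructor <;> linarith
  refine ⟨⟨-1 + (δ : ℂ), hmem⟩, ?_, ?_⟩
  · show (-1 + (δ:ℂ)) ∈ O
    apply hball
    rw [Metric.mem_ball]
    have hov : (outerpt.val : ℂ) = -1 := rfl
    rw [hov, dist_eq_norm]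
    have h2 : -1 + (δ:ℂ) - (-1) = ((δ:ℝ):ℂ) := by ring
    rw [h2, Complex.norm_real, Real.norm_eq_abs, abs_of_pos hδ0]
    exact hδε
  · intro hcon
    have h3 : -1 + (δ:ℂ) = -1 := congrArg Subtype.val hcon
    have h4 : (δ:ℂ) = 0 := by linear_combination h3
    exact_mod_cast hδ0.ne' (by exact_mod_cast h4)

lemma isOpen_compl_singleton_D (z : D) : IsOpen ({z}ᶜ : Set D) := by
  have h : ({z}ᶜ : Set D) = Subtype.val ⁻¹' ({z.val}ᶜ) := by
    ext w
    simp only [Set.mem_compl_iff, Set.mem_singleton_iff, Set.mem_preimage]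
    exact not_congr Subtype.ext_iff
  rw [h]
  exact isOpen_compl_singleton.preimage continuous_subtype_val

lemma origin_ne_outer (n : ℕ) : origin ≠ outer n := by
  intro h
  exact basept_ne_outerpt (pt_eq_outer_iff.1 h).2

lemma crsOpen_U0 : crsOpen U0 := by
  constructor
  · rw [isOpen_X_iff]
    intro n
    have : (fun z => pt n z) ⁻¹' U0 = {outerpt}ᶜ := by
      ext z
      simp only [Set.mem_preimage, Set.mem_compl_iff, Set.mem_singleton_iff, U0, Set.mem_setOf_eq]
      constructor
      · intro h hz
        exact h n (pt_eq_outer_iff.2 ⟨rfl, hz⟩)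
      · intro h m hm
        exact h (pt_eq_outer_iff.1 hm).2
    rw [this]
    exact isOpen_compl_singleton_D _
  · refine Or.inr (Set.Finite.subset Set.finite_empty ?_)
    intro n hn
    exfalso
    apply hn
    rintro y ⟨⟨z, rfl⟩, hy2⟩
    intro m hm
    obtain ⟨rfl, rfl⟩ := pt_eq_outer_iff.1 hm
    exact hy2 rfl

lemma crsOpen_punctured_cell (n : ℕ) : crsOpen (cell n \ {origin}) := by
  constructor
  · rw [isOpen_X_iff]
    intro m
    have : (fun z => pt m z) ⁻¹' (cell n \ {origin}) =
        if m = n then {basept}ᶜ else ∅ := by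
      ext z
      simp only [Set.mem_preimage, Set.mem_diff, Set.mem_singleton_iff, mem_cell_iff,
        pt_eq_origin_iff]
      by_cases h : m = n <;> simp [h]
    rw [this]
    split <;> [exact isOpen_compl_singleton_D _; exact isOpen_empty]
  · refine Or.inl ?_
    rintro ⟨-, h⟩
    exact h rfl

lemma mem_U0_of_ne (n : ℕ) (z : D) (hz : z ≠ outerpt) : pt n z ∈ U0 := by
  intro m hm
  exact hz (pt_eq_outer_iff.1 hm).2

theorem no_refinement :
    ¬ ∃ R : Set (Set X),
        (∀ V ∈ R, IsOpen[crsTop] V) ∧ ⋃₀ R = Set.univ ∧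
        (∀ V ∈ R, ∃ W ∈ insert U0 (Set.range fun n => cell n \ {origin}), V ⊆ W) ∧
        @LocallyFinite R X crsTop (Subtype.val : R → Set X) := by
  rintro ⟨R, hRo, hRc, hRref, hRlf⟩
  -- For each n, choose V_n ∈ R containing outer n
  have hcov : ∀ n : ℕ, ∃ V ∈ R, outer n ∈ V := by
    intro n
    have : outer n ∈ ⋃₀ R := hRc ▸ Set.mem_univ _
    obtain ⟨V, hV, hVo⟩ := this
    exact ⟨V, hV, hVo⟩
  choose V hVR hVo using hcov
  -- Each V n is contained in cell n \ {origin}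
  have hVsub : ∀ n, V n ⊆ cell n \ {origin} := by
    intro n
    obtain ⟨W, hW, hVW⟩ := hRref (V n) (hVR n)
    rcases hW with rfl | ⟨m, rfl⟩
    · exact absurd (hVW (hVo n)) (fun h => h n rfl)
    · have hm : outer n ∈ cell m \ {origin} := hVW (hVo n)
      obtain ⟨z, hz⟩ := hm.1
      obtain ⟨rfl, -⟩ := pt_eq_outer_iff.1 hz
      exact hVW
  -- V n are pairwise distinct
  have hVinj : Function.Injective V := by
    intro n m hnm
    have : outer n ∈ cell m \ {origin} := hVsub m (hnm ▸ hVo n)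
    obtain ⟨z, hz⟩ := this.1
    exact ((pt_eq_outer_iff.1 hz).1).symm
  -- Each V n meets the punctured cell
  have hVmeets : ∀ n, ∃ y ∈ V n, y ∈ cell n \ {outer n} := by
    intro n
    have hcrs : crsOpen (V n) := hRo (V n) (hVR n)
    have hop : IsOpen ((fun z => pt n z) ⁻¹' (V n)) :=
      (isOpen_X_iff.1 hcrs.1) n
    have hout : outerpt ∈ (fun z => pt n z) ⁻¹' (V n) := hVo n
    obtain ⟨z, hzV, hz⟩ := exists_near_outerpt hop hout
    refine ⟨pt n z, hzV, ⟨z, rfl⟩, ?_⟩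
    simp only [Set.mem_singleton_iff]
    intro h
    exact hz (pt_eq_outer_iff.1 h).2
  -- Local finiteness at the origin
  obtain ⟨t, ht, htf⟩ := hRlf origin
  obtain ⟨U, hUt, hUo, hoU⟩ := (@mem_nhds_iff X crsTop origin t).1 ht
  have hUcrs : crsOpen U := hUo
  have hB := hUcrs.2.resolve_left (fun h => h hoU)
  -- For n outside the finite bad set, V n meets t
  have hmem : ∀ n ∉ {n : ℕ | ¬ (cell n \ {outer n} ⊆ U)},
      (⟨V n, hVR n⟩ : R) ∈ {i : R | ((i : Set X) ∩ t).Nonempty} := by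
    intro n hn
    simp only [Set.mem_setOf_eq, not_not] at hn
    obtain ⟨y, hyV, hyc⟩ := hVmeets n
    exact ⟨y, hyV, hUt (hn hyc)⟩
  have hinj : Function.Injective (fun n : ℕ => (⟨V n, hVR n⟩ : R)) := by
    intro n m h
    exact hVinj (congrArg Subtype.val h)
  have hfin : ({n : ℕ | ¬ (cell n \ {outer n} ⊆ U)}ᶜ).Finite := by
    have := htf.preimage (f := fun n : ℕ => (⟨V n, hVR n⟩ : R)) (hinj.injOn)
    exact this.subset (fun n hn => hmem n hn)
  have : (Set.univ : Set ℕ).Finite := by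
    have := hB.union hfin
    rwa [Set.union_compl_self] at this
  exact Set.infinite_univ this

lemma cover_open : ∀ W ∈ insert U0 (Set.range fun n => cell n \ {origin}), IsOpen[crsTop] W := by
  rintro W (rfl | ⟨n, rfl⟩)
  · exact crsOpen_U0
  · exact crsOpen_punctured_cell n

lemma cover_univ : ⋃₀ insert U0 (Set.range fun n => cell n \ {origin}) = Set.univ := by
  ext y
  simp only [Set.mem_univ, iff_true]
  obtain ⟨⟨n, z⟩⟩ := y
  by_cases hz : z = outerpt
  · refine ⟨cell n \ {origin}, Set.mem_insert_of_mem _ ⟨n, rfl⟩, ⟨z, rfl⟩, ?_⟩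
    show ¬ (pt n z = origin)
    intro h
    have := pt_eq_origin_iff.1 h
    rw [hz] at this
    exact basept_ne_outerpt this.symm
  · exact ⟨U0, Set.mem_insert _ _, mem_U0_of_ne n z hz⟩

/-- `X_crs` is not paracompact: the open cover by `U₀` and the sets
`C_n \\ {x}` admits no locally finite open refinement. -/
theorem crs_not_paracompact :
    ¬ @ParacompactSpace X crsTop ∧
    ((∀ W ∈ insert U0 (Set.range fun n => cell n \ {origin}), IsOpen[crsTop] W) ∧
      ⋃₀ insert U0 (Set.range fun n => cell n \ {origin}) = Set.univ ∧
      ¬ ∃ R : Set (Set X),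
          (∀ V ∈ R, IsOpen[crsTop] V) ∧ ⋃₀ R = Set.univ ∧
          (∀ V ∈ R, ∃ W ∈ insert U0 (Set.range fun n => cell n \ {origin}), V ⊆ W) ∧
          @LocallyFinite R X crsTop (Subtype.val : R → Set X)) := by
  refine ⟨?_, cover_open, cover_univ, no_refinement⟩
  intro hp
  letI := crsTop
  obtain ⟨β, t, hto, htc, htlf, htref⟩ := hp.locallyFinite_refinement (Option ℕ)
    (Option.elim' U0 fun n => cell n \ {origin})
    (by rintro (_ | n)
        · exact crsOpen_U0
        · exact crsOpen_punctured_cell n)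
    (by rw [Set.iUnion_option, ← Set.sUnion_range, ← Set.sUnion_insert]
        exact cover_univ)
  refine no_refinement ⟨Set.range t, ?_, ?_, ?_, ?_⟩
  · rintro V ⟨b, rfl⟩
    exact hto b
  · rw [Set.sUnion_range]
    exact htc
  · rintro V ⟨b, rfl⟩
    obtain ⟨a, ha⟩ := htref b
    rcases a with _ | n
    · exact ⟨U0, Set.mem_insert _ _, ha⟩
    · exact ⟨cell n \ {origin}, Set.mem_insert_of_mem _ ⟨n, rfl⟩, ha⟩
  · intro x
    obtain ⟨tt, htt, hfin⟩ := htlf x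
    refine ⟨tt, htt, ?_⟩
    apply Set.Finite.subset
      (hfin.image (fun b => (⟨t b, Set.mem_range_self b⟩ : ↥(Set.range t))))
    rintro ⟨V, b, rfl⟩ hV
    exact ⟨b, hV, rfl⟩

end
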